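/- If the spectral radius of a real square matrix φ is strictly less than 1 and Q̄ is a symmetric positive definite matrix of the same size, then there exists a unique positive definite matrix Θ satisfying the discrete-time Lyapunov equation Θ = Q̄ + φᵀ Θ φ. -/

import Mathlib

open Matrix

noncomputable def specRad {N : Type*} [Fintype N] [DecidableEq N]
    (M : Matrix N N ℝ) : ENNReal :=
  spectralRadius ℂ (M.map (algebraMap ℝ ℂ))

section LyapAux

open Filter Topology
open scoped NNReal ENNReal

attribute [local instance] Matrix.frobeniusNormedAddCommGroup Matrix.frobeniusNormedSpace
  Matrix.frobeniusNormedRing Matrix.frobeniusNormedAlgebra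

noncomputable instance lyapCompC {N : ℕ} : CompleteSpace (Matrix (Fin N) (Fin N) ℂ) :=
  FiniteDimensional.complete ℂ _

noncomputable instance lyapCompR {N : ℕ} : CompleteSpace (Matrix (Fin N) (Fin N) ℝ) :=
  FiniteDimensional.complete ℝ _

lemma lyap_exists_pow_bound {N : ℕ} (φ : Matrix (Fin N) (Fin N) ℝ) (hφ : specRad φ < 1) :
    ∃ r : ℝ≥0, r < 1 ∧ ∀ᶠ n : ℕ in atTop, ‖φ ^ n‖₊ ≤ r ^ n := by
  set a := φ.map (algebraMap ℝ ℂ) with ha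
  have hmap : ∀ n : ℕ, ‖a ^ n‖₊ = ‖φ ^ n‖₊ := by
    intro n
    have h : a ^ n = (φ ^ n).map (algebraMap ℝ ℂ) := by
      induction n with
      | zero => simp [ha, Matrix.map_one]
      | succ k ih => rw [pow_succ, pow_succ, ih, Matrix.map_mul]
    rw [h]
    exact Matrix.frobenius_nnnorm_map_eq _ _ (fun a => by simp)
  have hρ : max (spectralRadius ℂ a) (1 / 2) < 1 := by
    apply max_lt hφ; norm_num
  obtain ⟨t, ht1, ht2⟩ := exists_between hρ
  have htt : t ≠ ⊤ := ht2.ne_top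
  refine ⟨t.toNNReal, ?_, ?_⟩
  · rw [← ENNReal.coe_lt_one_iff, ENNReal.coe_toNNReal htt]; exact ht2
  · have hT := spectrum.pow_nnnorm_pow_one_div_tendsto_nhds_spectralRadius a
    have hev : ∀ᶠ n : ℕ in atTop, (‖a ^ n‖₊ : ℝ≥0∞) ^ (1 / (n : ℝ)) < t :=
      hT.eventually_lt_const (lt_of_le_of_lt (le_max_left _ _) ht1)
    filter_upwards [hev, eventually_ge_atTop 1] with n hn hn1
    have hncast : (n : ℝ) ≠ 0 := by positivity
    have h1 : ((‖a ^ n‖₊ : ℝ≥0∞) ^ (1 / (n : ℝ))) ^ (n : ℝ) ≤ t ^ (n : ℝ) :=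
      ENNReal.rpow_le_rpow hn.le (by positivity)
    rw [← ENNReal.rpow_mul, one_div_mul_cancel hncast, ENNReal.rpow_one] at h1
    have h2 : (‖a ^ n‖₊ : ℝ≥0∞) ≤ (t.toNNReal : ℝ≥0∞) ^ (n : ℝ) := by
      rwa [ENNReal.coe_toNNReal htt]
    rw [ENNReal.rpow_natCast, ← ENNReal.coe_pow, ENNReal.coe_le_coe, hmap] at h2
    exact h2

/-- Applying a linear map to a tsum in finite dimensions. -/
lemma lyap_lmap_tsum {E F : Type*} [NormedAddCommGroup E] [NormedSpace ℝ E]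
    [FiniteDimensional ℝ E] [NormedAddCommGroup F] [NormedSpace ℝ F]
    {f : ℕ → E} (hf : Summable f) (L : E →ₗ[ℝ] F) :
    L (∑' k, f k) = ∑' k, L (f k) :=
  (LinearMap.toContinuousLinearMap L).map_tsum hf

lemma lyap_lmap_summable {E F : Type*} [NormedAddCommGroup E] [NormedSpace ℝ E]
    [FiniteDimensional ℝ E] [NormedAddCommGroup F] [NormedSpace ℝ F]
    {f : ℕ → E} (hf : Summable f) (L : E →ₗ[ℝ] F) :
    Summable fun k => L (f k) :=
  hf.map (LinearMap.toContinuousLinearMap L : E →ₗ[ℝ] F).toAddMonoidHom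
    (LinearMap.toContinuousLinearMap L).continuous

theorem stmt2 {N : ℕ} (φ Qbar : Matrix (Fin N) (Fin N) ℝ)
    (hQ : Qbar.PosDef) (hφ : specRad φ < 1) :
    ∃! Θ : Matrix (Fin N) (Fin N) ℝ, Θ.PosDef ∧ Θ = Qbar + φᵀ * Θ * φ := by
  obtain ⟨r, hr1, hr2⟩ := lyap_exists_pow_bound φ hφ
  set T : ℕ → Matrix (Fin N) (Fin N) ℝ := fun k => (φ ^ k)ᵀ * Qbar * φ ^ k with hT
  have hTnorm : ∀ k, ‖T k‖ ≤ ‖φ ^ k‖ ^ 2 * ‖Qbar‖ := by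
    intro k
    calc ‖(φ ^ k)ᵀ * Qbar * φ ^ k‖ ≤ ‖(φ ^ k)ᵀ * Qbar‖ * ‖φ ^ k‖ := norm_mul_le _ _
    _ ≤ ‖(φ ^ k)ᵀ‖ * ‖Qbar‖ * ‖φ ^ k‖ :=
        mul_le_mul_of_nonneg_right (norm_mul_le _ _) (norm_nonneg _)
    _ = ‖φ ^ k‖ ^ 2 * ‖Qbar‖ := by
        rw [Matrix.frobenius_norm_transpose]; ring
  have hTsum : Summable T := by
    apply Summable.of_norm_bounded_eventually_nat (g := fun k => ‖Qbar‖ * ((r : ℝ) ^ 2) ^ k)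
    · exact Summable.mul_left _ <| summable_geometric_of_lt_one (by positivity)
        (by
          have : (r : ℝ) < 1 := hr1
          nlinarith [r.coe_nonneg])
    · filter_upwards [hr2] with k hk
      have hk' : ‖φ ^ k‖ ≤ (r : ℝ) ^ k := by
        have := hk
        rw [← NNReal.coe_le_coe] at this
        simpa using this
      calc ‖T k‖ ≤ ‖φ ^ k‖ ^ 2 * ‖Qbar‖ := hTnorm k
      _ ≤ ((r : ℝ) ^ k) ^ 2 * ‖Qbar‖ := by
          gcongr
      _ = ‖Qbar‖ * ((r : ℝ) ^ 2) ^ k := by ring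
  set Θ : Matrix (Fin N) (Fin N) ℝ := ∑' k, T k with hΘ
  have hTsucc : ∀ k, T (k + 1) = φᵀ * T k * φ := by
    intro k
    simp only [hT, pow_succ, Matrix.transpose_mul]
    noncomm_ring
  have hshift : Summable fun k => T (k + 1) := by
    simpa using (summable_nat_add_iff 1).mpr hTsum
  have heq : Θ = Qbar + φᵀ * Θ * φ := by
    have h1 : φᵀ * Θ * φ = ∑' k, φᵀ * T k * φ := by
      rw [hΘ, ← hTsum.tsum_mul_left φᵀ, ← Summable.tsum_mul_right φ (hTsum.mul_left φᵀ)]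
    have h2 : Θ = T 0 + ∑' k, T (k + 1) := Summable.tsum_eq_zero_add hTsum
    rw [h1]
    conv_lhs => rw [h2]
    congr 1
    · simp [hT]
    · exact tsum_congr fun k => (hTsucc k)
  -- each T k is symmetric and positive semidefinite
  have hTsymm : ∀ k, (T k)ᵀ = T k := by
    intro k
    have hQs : Qbarᵀ = Qbar := hQ.1
    simp [hT, Matrix.transpose_mul, hQs, Matrix.mul_assoc]
  have hTpsd : ∀ k, (T k).PosSemidef := by
    intro k
    have h := hQ.posSemidef.conjTranspose_mul_mul_same (φ ^ k)
    rwa [Matrix.conjTranspose_eq_transpose_of_trivial] at h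
  have hΘpd : Θ.PosDef := by
    refine Matrix.PosDef.of_dotProduct_mulVec_pos ?_ ?_
    · -- Hermitian
      show Θᴴ = Θ
      rw [Matrix.conjTranspose_eq_transpose_of_trivial]
      let L : Matrix (Fin N) (Fin N) ℝ →ₗ[ℝ] Matrix (Fin N) (Fin N) ℝ :=
        { toFun := fun M => Mᵀ
          map_add' := fun M₁ M₂ => Matrix.transpose_add M₁ M₂
          map_smul' := fun c M => Matrix.transpose_smul c M }
      have := lyap_lmap_tsum hTsum L
      simp only [L, LinearMap.coe_mk, AddHom.coe_mk] at this
      rw [hΘ]; refine this.trans ?_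
      exact tsum_congr fun k => hTsymm k
    · intro x hx
      let L : Matrix (Fin N) (Fin N) ℝ →ₗ[ℝ] ℝ :=
        { toFun := fun M => x ⬝ᵥ (M *ᵥ x)
          map_add' := fun M₁ M₂ => by simp [Matrix.add_mulVec, dotProduct_add]
          map_smul' := fun c M => by simp [Matrix.smul_mulVec] }
      have hmap := lyap_lmap_tsum hTsum L
      have hsumL : Summable fun k => L (T k) := lyap_lmap_summable hTsum L
      have hLshift : Summable fun k => L (T (k + 1)) := by
        simpa using (summable_nat_add_iff 1).mpr hsumL
      have hpos0 : 0 < L (T 0) := by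
        have := hQ.dotProduct_mulVec_pos hx
        simpa [L, hT] using this
      have hnonneg : ∀ k, 0 ≤ L (T k) := by
        intro k
        have := (hTpsd k).dotProduct_mulVec_nonneg x
        simpa [L] using this
      have hxθ : x ⬝ᵥ (Θ *ᵥ x) = ∑' k, L (T k) := by
        rw [hΘ]; exact hmap
      have h0 : (0 : ℝ) < ∑' k, L (T k) := by
        rw [Summable.tsum_eq_zero_add hsumL]
        have : 0 ≤ ∑' k, L (T (k + 1)) := tsum_nonneg fun k => hnonneg (k + 1)
        linarith
      simpa [hxθ] using h0
  refine ⟨Θ, ⟨hΘpd, heq⟩, ?_⟩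
  rintro Θ' ⟨hΘ'pd, hΘ'eq⟩
  -- uniqueness
  set Δ := Θ' - Θ with hΔdef
  have hΔ : Δ = φᵀ * Δ * φ := by
    calc Δ = (Qbar + φᵀ * Θ' * φ) - (Qbar + φᵀ * Θ * φ) := by rw [hΔdef, ← hΘ'eq, ← heq]
    _ = φᵀ * (Θ' - Θ) * φ := by noncomm_ring
    _ = φᵀ * Δ * φ := by rw [← hΔdef]
  have hΔn : ∀ n : ℕ, Δ = φᵀ ^ n * Δ * φ ^ n := by
    intro n
    induction n with
    | zero => simp
    | succ k ih =>
      calc Δ = φᵀ ^ k * Δ * φ ^ k := ih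
      _ = φᵀ ^ k * (φᵀ * Δ * φ) * φ ^ k := by rw [← hΔ]
      _ = φᵀ ^ (k + 1) * Δ * φ ^ (k + 1) := by
          rw [pow_succ φᵀ k, pow_succ' φ k]
          noncomm_ring
  have hΔ0 : Δ = 0 := by
    by_contra hne
    have hpos : 0 < ‖Δ‖ := norm_pos_iff.mpr hne
    obtain ⟨n, hn, hn1⟩ := (hr2.and (eventually_ge_atTop 1)).exists
    have hφn : ‖φ ^ n‖ < 1 := by
      have h1 : ‖φ ^ n‖ ≤ (r : ℝ) ^ n := by
        rw [← NNReal.coe_le_coe] at hn; simpa using hn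
      have h2 : (r : ℝ) ^ n < 1 := pow_lt_one₀ r.coe_nonneg hr1 (by omega)
      linarith
    have hub : ‖Δ‖ ≤ ‖φ ^ n‖ ^ 2 * ‖Δ‖ := by
      calc ‖Δ‖ = ‖φᵀ ^ n * Δ * φ ^ n‖ := by rw [← hΔn n]
      _ ≤ ‖φᵀ ^ n * Δ‖ * ‖φ ^ n‖ := norm_mul_le _ _
      _ ≤ ‖φᵀ ^ n‖ * ‖Δ‖ * ‖φ ^ n‖ :=
          mul_le_mul_of_nonneg_right (norm_mul_le _ _) (norm_nonneg _)
      _ = ‖φ ^ n‖ ^ 2 * ‖Δ‖ := by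
          rw [← Matrix.transpose_pow, Matrix.frobenius_norm_transpose]; ring
    have hsq : ‖φ ^ n‖ ^ 2 < 1 := by nlinarith [norm_nonneg (φ ^ n)]
    have hlt : ‖φ ^ n‖ ^ 2 * ‖Δ‖ < ‖Δ‖ := by nlinarith
    linarith
  have : Θ' = Θ := by
    have := sub_eq_zero.mp hΔ0
    exact this
  exact this

end LyapAux
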